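/- A Leibniz algebra L (i.e., a vector space with bilinear bracket satisfying [x,[y,z]] = [[x,y],z] − [[x,z],y]) is a Leibniz n-algebra with respect to the n-ary bracket [x_1,…,x_n] = [x_1,[x_2,…,[x_{n-1},x_n]…]]. -/

import Mathlib

open Function TensorProduct

section Prelude

variable {L : Type*}

/-- The nested (iterated) bracket: `nestBr b k` is the `k*(n-1)+1`-ary operation
`ω_p(a_1,…,a_p) = b(a_1,…,a_{n-1}, nestBr b (k-1) (a_n,…,a_p))`. -/
def nestBr {n : ℕ} (b : (Fin n → L) → L) : (k : ℕ) → (Fin (k * (n - 1) + 1) → L) → L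
  | 0, a => a ⟨0, Nat.succ_pos _⟩
  | k + 1, a =>
    b fun j : Fin n =>
      if h : (j : ℕ) < n - 1 then
        a ⟨(j : ℕ),
          Nat.lt_succ_of_lt (lt_of_lt_of_le h (Nat.le_mul_of_pos_left _ (Nat.succ_pos k)))⟩
      else
        nestBr b k fun i =>
          a ⟨(n - 1) + (i : ℕ), by
            have h1 : (k + 1) * (n - 1) + 1 = (n - 1) + (k * (n - 1) + 1) := by ring
            rw [h1]
            exact Nat.add_lt_add_left i.isLt _⟩

/-- `f` is a derivation with respect to the `n`-linear operation `b`. -/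
def IsNDeriv {n : ℕ} [AddCommMonoid L] (b : (Fin n → L) → L) (f : L → L) : Prop :=
  ∀ a : Fin n → L, f (b a) = ∑ i, b (Function.update a i (f (a i)))

/-- The fundamental identity of Leibniz `n`-algebras:
`[[x_1,…,x_n],y_2,…,y_n] = Σ_i [x_1,…,[x_i,y_2,…,y_n],…,x_n]`
(the entries `y 1, …, y (n-1)` play the role of `y_2,…,y_n`). -/
def FundId {n : ℕ} [NeZero n] [AddCommMonoid L] (b : (Fin n → L) → L) : Prop :=
  ∀ x y : Fin n → L,
    b (Function.update y 0 (b x)) =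
      ∑ i, b (Function.update x i (b (Function.update y 0 (x i))))

/-- The right-nested bracket `[x_1,[x_2,…,[x_m,x_{m+1}]…]]` built from a binary bracket. -/
def nested2 (b : L → L → L) : (m : ℕ) → (Fin (m + 1) → L) → L
  | 0, a => a 0
  | m + 1, a => b (a 0) (nested2 b m fun i => a i.succ)

end Prelude


section Aux
variable {K L : Type*} [Field K] [AddCommGroup L] [Module K L]

lemma nested2_succ (b : L → L → L) (m : ℕ) (a : Fin (m + 2) → L) :
    nested2 b (m + 1) a = b (a 0) (nested2 b m (Fin.tail a)) := rfl

lemma deriv_nested2 (br : L →ₗ[K] L →ₗ[K] L) (f : L →ₗ[K] L)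
    (hf : ∀ u v, f (br u v) = br (f u) v + br u (f v)) :
    ∀ (m : ℕ) (a : Fin (m + 1) → L),
      f (nested2 (fun x y => br x y) m a) =
        ∑ i, nested2 (fun x y => br x y) m (Function.update a i (f (a i))) := by
  intro m
  induction m with
  | zero => intro a; simp [nested2]
  | succ m ih =>
    intro a
    rw [nested2_succ, hf]
    conv_rhs => rw [Fin.sum_univ_succ]
    rw [ih (Fin.tail a), nested2_succ, Function.update_self, Fin.tail_update_zero]
    congr 1
    rw [map_sum]
    refine Finset.sum_congr rfl fun j _ => ?_
    rw [nested2_succ, Function.update_of_ne (Fin.succ_ne_zero j).symm, Fin.tail_update_succ]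
    rfl

lemma exists_multilinear (br : L →ₗ[K] L →ₗ[K] L) :
    ∀ m : ℕ, ∃ bn : MultilinearMap K (fun _ : Fin (m + 1) => L) L,
      ⇑bn = nested2 (fun x y => br x y) m := by
  intro m
  induction m with
  | zero =>
    haveI : Subsingleton (Fin (0 + 1)) := Fin.subsingleton_one
    refine ⟨MultilinearMap.ofSubsingleton K L L 0 LinearMap.id, ?_⟩
    funext a
    simp [nested2]
  | succ m ih =>
    obtain ⟨bn, hbn⟩ := ih
    refine ⟨LinearMap.uncurryLeft
      { toFun := fun z => (br z).compMultilinearMap bn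
        map_add' := by intro x y; ext a; simp
        map_smul' := by intro c x; ext a; simp }, ?_⟩
    funext a
    rw [nested2_succ]
    simp only [LinearMap.uncurryLeft, hbn, MultilinearMap.coe_mk, LinearMap.coe_mk,
      AddHom.coe_mk, LinearMap.compMultilinearMap_apply]
    rfl

end Aux

/-- a Leibniz algebra is a Leibniz `n`-algebra (`n = m+1 ≥ 2`) with respect to
the right-nested bracket `[x_1,…,x_n] = [x_1,[x_2,…,[x_{n-1},x_n]…]]`. -/
theorem leibniz_n_algebra_of_leibniz {K L : Type*} [Field K] [AddCommGroup L] [Module K L]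
    (br : L →ₗ[K] L →ₗ[K] L)
    (hLeib : ∀ x y z : L, br x (br y z) = br (br x y) z - br (br x z) y)
    (m : ℕ) (hm : 1 ≤ m) :
    FundId (nested2 (fun x y => br x y) m) ∧
      ∃ bn : MultilinearMap K (fun _ : Fin (m + 1) => L) L,
        ⇑bn = nested2 (fun x y => br x y) m := by
  obtain ⟨k, rfl⟩ : ∃ k, m = k + 1 := ⟨m - 1, (Nat.succ_pred_eq_of_pos hm).symm⟩
  constructor
  · intro x y
    set Y := nested2 (fun x y => br x y) k (Fin.tail y) with hY
    have hupd : ∀ z : L, nested2 (fun x y => br x y) (k + 1) (Function.update y 0 z) = br z Y := by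
      intro z
      rw [nested2_succ, Function.update_self, Fin.tail_update_zero]
    have hf : ∀ u v, br.flip Y (br u v) = br (br.flip Y u) v + br u (br.flip Y v) := by
      intro u v
      simp only [LinearMap.flip_apply]
      rw [hLeib u v Y]
      abel
    have hd := deriv_nested2 br (br.flip Y) hf (k + 1) x
    simp only [LinearMap.flip_apply] at hd
    simp only [hupd]
    exact hd
  · exact exists_multilinear br (k + 1)
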